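/- Let M be a maximum-weight matching of size at most k and M' a maximum-weight matching of size at most k+2 in a weighted graph, with |M| < |M'|. Then there exist matchings M₁ of size at most k+1 and M₂ of size at most k+1 with w(M₁) + w(M₂) = w(M) + w(M'). -/

import Mathlib

/-- A finset of edges of a simple graph forms a matching if all its edges are edges of
the graph and distinct edges share no vertex. -/
def IsMatchingFinset {V : Type*} [DecidableEq V] (G : SimpleGraph V)
    (M : Finset (Sym2 V)) : Prop :=
  (∀ e ∈ M, e ∈ G.edgeSet) ∧
    ∀ e ∈ M, ∀ f ∈ M, e ≠ f → ∀ v : V, ¬(v ∈ e ∧ v ∈ f)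

open Finset

section Aux

variable {V : Type*} [Fintype V] [DecidableEq V]

/-- The set of vertices touched by an edge set. -/
def eVerts (S : Finset (Sym2 V)) : Finset V := univ.filter (fun v => ∃ f ∈ S, v ∈ f)

lemma mem_eVerts {S : Finset (Sym2 V)} {v : V} : v ∈ eVerts S ↔ ∃ f ∈ S, v ∈ f := by
  simp [eVerts]

lemma eVerts_mono {S T : Finset (Sym2 V)} (h : S ⊆ T) : eVerts S ⊆ eVerts T := by
  intro v hv
  rw [mem_eVerts] at hv ⊢
  obtain ⟨f, hf, hvf⟩ := hv
  exact ⟨f, h hf, hvf⟩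

lemma eVerts_insert (f : Sym2 V) (S : Finset (Sym2 V)) :
    eVerts (insert f S) = eVerts {f} ∪ eVerts S := by
  ext v
  simp only [mem_eVerts, mem_union, mem_insert, mem_singleton]
  constructor
  · rintro ⟨g, hg | hg, hvg⟩
    · exact Or.inl ⟨g, hg, hvg⟩
    · exact Or.inr ⟨g, hg, hvg⟩
  · rintro (⟨g, hg, hvg⟩ | ⟨g, hg, hvg⟩)
    · exact ⟨g, Or.inl hg, hvg⟩
    · exact ⟨g, Or.inr hg, hvg⟩

lemma eVerts_singleton_subset (a b : V) : eVerts ({s(a,b)} : Finset (Sym2 V)) ⊆ {a, b} := by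
  intro v hv
  rw [mem_eVerts] at hv
  obtain ⟨f, hf, hvf⟩ := hv
  rw [mem_singleton] at hf
  subst hf
  rw [Sym2.mem_iff] at hvf
  simpa using hvf

lemma eVerts_singleton_card {f : Sym2 V} (h : ¬ f.IsDiag) :
    (eVerts ({f} : Finset (Sym2 V))).card = 2 := by
  induction f using Sym2.ind with
  | _ a b =>
    have hab : a ≠ b := by simpa using h
    have : eVerts ({s(a,b)} : Finset (Sym2 V)) = {a, b} := by
      ext v
      rw [mem_eVerts]
      simp [Sym2.mem_iff]
    rw [this, card_insert_of_notMem (by simpa using hab), card_singleton]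

lemma eVerts_card_matching {G : SimpleGraph V} :
    ∀ N : Finset (Sym2 V), (∀ e ∈ N, e ∈ G.edgeSet) →
    (∀ e ∈ N, ∀ f ∈ N, e ≠ f → ∀ v : V, ¬(v ∈ e ∧ v ∈ f)) →
    (eVerts N).card = 2 * N.card := by
  intro N
  induction N using Finset.induction_on with
  | empty => intro _ _; simp [eVerts]
  | insert _ _ hxs ih =>
    rename_i x s
    intro hG hm
    have hdisj : Disjoint (eVerts ({x} : Finset (Sym2 V))) (eVerts s) := by
      rw [Finset.disjoint_left]
      intro v hv hv'
      rw [mem_eVerts] at hv hv'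
      obtain ⟨g, hg, hvg⟩ := hv
      obtain ⟨g', hg', hvg'⟩ := hv'
      rw [mem_singleton] at hg
      rw [hg] at hvg
      exact hm x (mem_insert_self _ _) g' (mem_insert_of_mem hg')
        (fun hh => hxs (hh ▸ hg')) v ⟨hvg, hvg'⟩
    rw [eVerts_insert, card_union_of_disjoint hdisj,
      eVerts_singleton_card (G.not_isDiag_of_mem_edgeSet (hG x (mem_insert_self _ _))),
      ih (fun e he => hG e (mem_insert_of_mem he))
        (fun e he f' hf' => hm e (mem_insert_of_mem he) f' (mem_insert_of_mem hf')),
      card_insert_of_notMem hxs]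
    ring

/-- A connected edge set touches at most card + 1 vertices. -/
lemma eVerts_card_le (Q : Finset (Sym2 V)) (e : Sym2 V) (he : e ∈ Q)
    (hconn : ∀ f ∈ Q, Relation.ReflTransGen
      (fun a b => a ∈ Q ∧ b ∈ Q ∧ ∃ v : V, v ∈ a ∧ v ∈ b) e f) :
    (eVerts Q).card ≤ Q.card + 1 := by
  suffices h : ∀ n (S : Finset (Sym2 V)), S ⊆ Q → e ∈ S →
      (eVerts S).card ≤ S.card + 1 → (Q \ S).card = n → (eVerts Q).card ≤ Q.card + 1 by
    refine h (Q \ {e}).card {e} (by simpa using he) (mem_singleton_self e) ?_ rfl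
    induction e using Sym2.ind with
    | _ a b =>
      calc (eVerts ({s(a,b)} : Finset (Sym2 V))).card ≤ ({a, b} : Finset V).card :=
            card_le_card (eVerts_singleton_subset a b)
        _ ≤ 2 := card_insert_le _ _ |>.trans (by simp)
        _ = ({s(a,b)} : Finset (Sym2 V)).card + 1 := by simp
  intro n
  induction n with
  | zero =>
    intro S hSQ heS hcard hQS
    have hQle : Q ⊆ S := by
      intro x hx
      by_contra hxS
      have hmem : x ∈ Q \ S := mem_sdiff.mpr ⟨hx, hxS⟩
      rw [card_eq_zero.mp hQS] at hmem
      exact notMem_empty x hmem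
    have hSeq : S = Q := Subset.antisymm hSQ hQle
    rw [← hSeq]
    exact hcard
  | succ n ih =>
    intro S hSQ heS hcard hQS
    have hne : S ≠ Q := by
      intro hh
      rw [hh, sdiff_self] at hQS
      simp at hQS
    -- grow: find a new edge sharing a vertex with S
    have hgrow : ∃ f ∈ Q, f ∉ S ∧ ∃ g ∈ S, ∃ v : V, v ∈ g ∧ v ∈ f := by
      obtain ⟨f0, hf0Q, hf0S⟩ : ∃ f0 ∈ Q, f0 ∉ S := by
        by_contra hc
        push_neg at hc
        exact hne (Subset.antisymm hSQ hc)
      have key : ∀ f, Relation.ReflTransGen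
          (fun a b => a ∈ Q ∧ b ∈ Q ∧ ∃ v : V, v ∈ a ∧ v ∈ b) e f →
          f ∈ S ∨ ∃ f' ∈ Q, f' ∉ S ∧ ∃ g ∈ S, ∃ v : V, v ∈ g ∧ v ∈ f' := by
        intro f hf
        induction hf with
        | refl => exact Or.inl heS
        | @tail b c hab hbc ihr =>
          rcases ihr with hbS | hP
          · by_cases hcS : c ∈ S
            · exact Or.inl hcS
            · obtain ⟨v, hvb, hvc⟩ := hbc.2.2
              exact Or.inr ⟨c, hbc.2.1, hcS, b, hbS, v, hvb, hvc⟩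
          · exact Or.inr hP
      rcases key f0 (hconn f0 hf0Q) with h | h
      · exact absurd h hf0S
      · exact h
    obtain ⟨f, hfQ, hfS, g, hgS, v, hvg, hvf⟩ := hgrow
    obtain ⟨wv, hwv⟩ : ∃ wv, f = s(v, wv) := Sym2.mem_iff_exists.mp hvf
    have hvS : v ∈ eVerts S := mem_eVerts.mpr ⟨g, hgS, hvg⟩
    have hsub : eVerts (insert f S) ⊆ insert wv (eVerts S) := by
      rw [eVerts_insert]
      intro x hx
      rcases mem_union.mp hx with hx | hx
      · rw [hwv] at hx
        rcases mem_insert.mp (eVerts_singleton_subset v wv hx) with h | h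
        · subst h; exact mem_insert_of_mem hvS
        · rw [mem_singleton] at h; subst h; exact mem_insert_self _ _
      · exact mem_insert_of_mem hx
    refine ih (insert f S) (insert_subset hfQ hSQ) (mem_insert_of_mem heS) ?_ ?_
    · calc (eVerts (insert f S)).card ≤ (insert wv (eVerts S)).card := card_le_card hsub
        _ ≤ (eVerts S).card + 1 := card_insert_le _ _
        _ ≤ S.card + 1 + 1 := by omega
        _ = (insert f S).card + 1 := by rw [card_insert_of_notMem hfS]
    · rw [Finset.sdiff_insert, card_erase_of_mem (mem_sdiff.mpr ⟨hfQ, hfS⟩), hQS]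
      omega

/-- Share-a-vertex relation among edges of `D`. -/
def shareRel (D : Finset (Sym2 V)) (a b : Sym2 V) : Prop :=
  a ∈ D ∧ b ∈ D ∧ ∃ v : V, v ∈ a ∧ v ∈ b

lemma shareRel_symm (D : Finset (Sym2 V)) : Symmetric (shareRel D) := by
  rintro a b ⟨ha, hb, v, hva, hvb⟩
  exact ⟨hb, ha, v, hvb, hva⟩

open scoped Classical in
/-- The connected component of `e` in the edge set `D`. -/
noncomputable def comp (D : Finset (Sym2 V)) (e : Sym2 V) : Finset (Sym2 V) :=
  D.filter (fun f => Relation.ReflTransGen (shareRel D) e f)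

lemma mem_comp {D : Finset (Sym2 V)} {e f : Sym2 V} :
    f ∈ comp D e ↔ f ∈ D ∧ Relation.ReflTransGen (shareRel D) e f := by
  classical
  simp [comp]

lemma comp_subset (D : Finset (Sym2 V)) (e : Sym2 V) : comp D e ⊆ D := by
  intro f hf; exact (mem_comp.mp hf).1

lemma self_mem_comp {D : Finset (Sym2 V)} {e : Sym2 V} (he : e ∈ D) : e ∈ comp D e :=
  mem_comp.mpr ⟨he, Relation.ReflTransGen.refl⟩

lemma comp_closed {D : Finset (Sym2 V)} {e f g : Sym2 V} (hf : f ∈ comp D e)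
    (hg : g ∈ D) (hshare : ∃ v : V, v ∈ f ∧ v ∈ g) : g ∈ comp D e := by
  obtain ⟨hfD, hreach⟩ := mem_comp.mp hf
  exact mem_comp.mpr ⟨hg, hreach.tail ⟨hfD, hg, hshare⟩⟩

lemma comp_eq_of_mem {D : Finset (Sym2 V)} {e f : Sym2 V} (hf : f ∈ comp D e) :
    comp D e = comp D f := by
  obtain ⟨hfD, hreach⟩ := mem_comp.mp hf
  have hrev : Relation.ReflTransGen (shareRel D) f e :=
    by haveI : Std.Symm (shareRel D) := ⟨fun a b h => shareRel_symm D h⟩; exact Std.Symm.symm _ _ hreach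
  ext g
  rw [mem_comp, mem_comp]
  constructor
  · rintro ⟨hgD, hr⟩; exact ⟨hgD, hrev.trans hr⟩
  · rintro ⟨hgD, hr⟩; exact ⟨hgD, hreach.trans hr⟩

lemma comp_disjoint {D : Finset (Sym2 V)} {e f : Sym2 V} (h : comp D e ≠ comp D f) :
    Disjoint (comp D e) (comp D f) := by
  rw [Finset.disjoint_left]
  intro g hge hgf
  exact h ((comp_eq_of_mem hge).trans (comp_eq_of_mem hgf).symm)

lemma comp_conn {D : Finset (Sym2 V)} {e : Sym2 V} (he : e ∈ D) :
    ∀ f ∈ comp D e, Relation.ReflTransGen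
      (fun a b => a ∈ comp D e ∧ b ∈ comp D e ∧ ∃ v : V, v ∈ a ∧ v ∈ b) e f := by
  intro f hf
  obtain ⟨hfD, hreach⟩ := mem_comp.mp hf
  clear hf
  induction hreach with
  | refl => exact Relation.ReflTransGen.refl
  | @tail b c hab hbc ihr =>
    have hbc' : b ∈ comp D e := mem_comp.mpr ⟨hbc.1, hab⟩
    have hcc : c ∈ comp D e := mem_comp.mpr ⟨hbc.2.1, hab.tail hbc⟩
    exact (ihr hbc.1).tail ⟨hbc', hcc, hbc.2.2⟩

/-- If `|A| < |B|`, some component of `A ∪ B` contains more `B` than `A` edges. -/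
lemma exists_good_comp (A B : Finset (Sym2 V)) (hAB : Disjoint A B)
    (h : A.card < B.card) :
    ∃ e ∈ A ∪ B, (A ∩ comp (A ∪ B) e).card < (B ∩ comp (A ∪ B) e).card := by
  by_contra hc
  push_neg at hc
  set D := A ∪ B with hD
  set reps := D.image (comp D) with hreps
  have hdisj : ∀ Q₁ ∈ reps, ∀ Q₂ ∈ reps, Q₁ ≠ Q₂ → Disjoint Q₁ Q₂ := by
    intro Q₁ hQ₁ Q₂ hQ₂ hne
    obtain ⟨e₁, _, rfl⟩ := mem_image.mp hQ₁
    obtain ⟨e₂, _, rfl⟩ := mem_image.mp hQ₂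
    exact comp_disjoint hne
  have hcover : ∀ (C : Finset (Sym2 V)), C ⊆ D → C = reps.biUnion (fun Q => C ∩ Q) := by
    intro C hCD
    ext x
    simp only [mem_biUnion, mem_inter]
    constructor
    · intro hx
      exact ⟨comp D x, mem_image.mpr ⟨x, hCD hx, rfl⟩, hx, self_mem_comp (hCD hx)⟩
    · rintro ⟨Q, _, hx, _⟩; exact hx
  have hcardC : ∀ (C : Finset (Sym2 V)), C ⊆ D →
      C.card = ∑ Q ∈ reps, (C ∩ Q).card := by
    intro C hCD
    conv_lhs => rw [hcover C hCD]
    exact card_biUnion (fun Q₁ h₁ Q₂ h₂ hne =>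
      Finset.disjoint_of_subset_left (inter_subset_right)
        (Finset.disjoint_of_subset_right (inter_subset_right) (hdisj Q₁ h₁ Q₂ h₂ hne)))
  have hAcard := hcardC A subset_union_left
  have hBcard := hcardC B subset_union_right
  have hle : B.card ≤ A.card := by
    rw [hAcard, hBcard]
    apply Finset.sum_le_sum
    intro Q hQ
    obtain ⟨e, heD, rfl⟩ := mem_image.mp hQ
    exact hc e heD
  omega

end Aux

section Swap

variable {V : Type*} [Fintype V] [DecidableEq V]

/-- Swapping a closed set of the symmetric difference yields a matching. -/
lemma swap_matching {G : SimpleGraph V} {M M' : Finset (Sym2 V)}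
    (hM : IsMatchingFinset G M) (hM' : IsMatchingFinset G M')
    {Q : Finset (Sym2 V)}
    (hcl : ∀ f ∈ Q, ∀ g ∈ (M \ M') ∪ (M' \ M), (∃ v : V, v ∈ f ∧ v ∈ g) → g ∈ Q) :
    IsMatchingFinset G ((M \ Q) ∪ ((M' \ M) ∩ Q)) := by
  constructor
  · intro e he
    rcases mem_union.mp he with h | h
    · exact hM.1 e (mem_sdiff.mp h).1
    · exact hM'.1 e (mem_sdiff.mp (mem_inter.mp h).1).1
  · intro e he f hf hne v hv
    rcases mem_union.mp he with he' | he' <;> rcases mem_union.mp hf with hf' | hf'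
    · exact hM.2 e (mem_sdiff.mp he').1 f (mem_sdiff.mp hf').1 hne v hv
    · -- e ∈ M \ Q, f ∈ (M' \ M) ∩ Q
      obtain ⟨heM, heQ⟩ := mem_sdiff.mp he'
      obtain ⟨hfB, hfQ⟩ := mem_inter.mp hf'
      obtain ⟨hfM', hfM⟩ := mem_sdiff.mp hfB
      by_cases heM' : e ∈ M'
      · exact hM'.2 e heM' f hfM' hne v hv
      · have heD : e ∈ (M \ M') ∪ (M' \ M) :=
          mem_union_left _ (mem_sdiff.mpr ⟨heM, heM'⟩)
        exact heQ (hcl f hfQ e heD ⟨v, hv.2, hv.1⟩)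
    · -- symmetric
      obtain ⟨hfM, hfQ⟩ := mem_sdiff.mp hf'
      obtain ⟨heB, heQ⟩ := mem_inter.mp he'
      obtain ⟨heM', heM⟩ := mem_sdiff.mp heB
      by_cases hfM' : f ∈ M'
      · exact hM'.2 e heM' f hfM' hne v hv
      · have hfD : f ∈ (M \ M') ∪ (M' \ M) :=
          mem_union_left _ (mem_sdiff.mpr ⟨hfM, hfM'⟩)
        exact hfQ (hcl e heQ f hfD ⟨v, hv.1, hv.2⟩)
    · exact hM'.2 e (mem_sdiff.mp (mem_inter.mp he').1).1
        f (mem_sdiff.mp (mem_inter.mp hf').1).1 hne v hv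

end Swap

/-- If `M` is a maximum-weight matching of size at most `k` and `M'` a maximum-weight
matching of size at most `k+2`, with `|M| < |M'|`, then there are matchings `M₁`, `M₂`,
each of size at most `k+1`, with `w(M₁) + w(M₂) = w(M) + w(M')`. -/
theorem stmt_5 {V : Type*} [Fintype V] [DecidableEq V] (G : SimpleGraph V)
    (w : Sym2 V → ℝ) (hw : ∀ e, 0 ≤ w e) (k : ℕ) (M M' : Finset (Sym2 V))
    (hM : IsGreatest
      {x : ℝ | ∃ N : Finset (Sym2 V), IsMatchingFinset G N ∧ N.card ≤ k ∧
        x = ∑ e ∈ N, w e} (∑ e ∈ M, w e))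
    (hMmem : IsMatchingFinset G M ∧ M.card ≤ k)
    (hM' : IsGreatest
      {x : ℝ | ∃ N : Finset (Sym2 V), IsMatchingFinset G N ∧ N.card ≤ k + 2 ∧
        x = ∑ e ∈ N, w e} (∑ e ∈ M', w e))
    (hM'mem : IsMatchingFinset G M' ∧ M'.card ≤ k + 2)
    (hcard : M.card < M'.card) :
    ∃ M₁ M₂ : Finset (Sym2 V),
      IsMatchingFinset G M₁ ∧ M₁.card ≤ k + 1 ∧
      IsMatchingFinset G M₂ ∧ M₂.card ≤ k + 1 ∧
      (∑ e ∈ M₁, w e) + (∑ e ∈ M₂, w e) = (∑ e ∈ M, w e) + (∑ e ∈ M', w e) := by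
  classical
  by_cases hM'k : M'.card ≤ k + 1
  · exact ⟨M, M', hMmem.1, hMmem.2.trans (Nat.le_succ k), hM'mem.1, hM'k, rfl⟩
  · have hM'card : M'.card = k + 2 := le_antisymm hM'mem.2 (by omega)
    set A := M \ M' with hAdef
    set B := M' \ M with hBdef
    have hABdisj : Disjoint A B := by
      rw [Finset.disjoint_left]
      intro g hgA hgB
      exact (mem_sdiff.mp hgB).2 (mem_sdiff.mp hgA).1
    have hcardAB : A.card < B.card := by
      have h1 := card_inter_add_card_sdiff M M'
      have h2 := card_inter_add_card_sdiff M' M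
      rw [Finset.inter_comm] at h2
      rw [hAdef, hBdef]
      omega
    obtain ⟨e, heD, hlt⟩ := exists_good_comp A B hABdisj hcardAB
    set D := A ∪ B with hDdef
    set Q := comp D e with hQdef
    have hQD : Q ⊆ D := comp_subset _ _
    -- excess bound: (B ∩ Q).card ≤ (A ∩ Q).card + 1
    have hQcard : Q.card = (A ∩ Q).card + (B ∩ Q).card := by
      have hsplit : Q = (A ∩ Q) ∪ (B ∩ Q) := by
        ext g
        simp only [mem_union, mem_inter]
        constructor
        · intro hg
          rcases mem_union.mp (hQD hg) with h | h
          · exact Or.inl ⟨h, hg⟩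
          · exact Or.inr ⟨h, hg⟩
        · rintro (⟨_, h⟩ | ⟨_, h⟩) <;> exact h
      conv_lhs => rw [hsplit]
      apply card_union_of_disjoint
      exact Finset.disjoint_of_subset_left (inter_subset_left)
        (Finset.disjoint_of_subset_right (inter_subset_left) hABdisj)
    have hBQmatch : (∀ f ∈ B ∩ Q, f ∈ G.edgeSet) ∧
        (∀ f ∈ B ∩ Q, ∀ g ∈ B ∩ Q, f ≠ g → ∀ v : V, ¬(v ∈ f ∧ v ∈ g)) := by
      constructor
      · intro f hf
        exact hM'mem.1.1 f (mem_sdiff.mp (mem_inter.mp hf).1).1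
      · intro f hf g hg
        exact hM'mem.1.2 f (mem_sdiff.mp (mem_inter.mp hf).1).1
          g (mem_sdiff.mp (mem_inter.mp hg).1).1
    have hverts : 2 * (B ∩ Q).card ≤ Q.card + 1 := by
      have h1 : (eVerts (B ∩ Q)).card = 2 * (B ∩ Q).card :=
        eVerts_card_matching (B ∩ Q) hBQmatch.1 hBQmatch.2
      have h2 : (eVerts (B ∩ Q)).card ≤ (eVerts Q).card :=
        card_le_card (eVerts_mono (inter_subset_right))
      have h3 : (eVerts Q).card ≤ Q.card + 1 :=
        eVerts_card_le Q e (self_mem_comp heD) (comp_conn heD)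
      omega
    have hexc : (B ∩ Q).card = (A ∩ Q).card + 1 := by omega
    -- closure property of Q
    have hcl : ∀ f ∈ Q, ∀ g ∈ D, (∃ v : V, v ∈ f ∧ v ∈ g) → g ∈ Q := by
      intro f hf g hg hshare
      exact comp_closed hf hg hshare
    -- the two new matchings
    refine ⟨(M \ Q) ∪ (B ∩ Q), (M' \ Q) ∪ (A ∩ Q), ?_, ?_, ?_, ?_, ?_⟩
    · exact swap_matching hMmem.1 hM'mem.1 hcl
    · have hMQ : M ∩ Q = A ∩ Q := by
        ext g
        simp only [mem_inter]
        constructor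
        · rintro ⟨hgM, hgQ⟩
          rcases mem_union.mp (hQD hgQ) with h | h
          · exact ⟨h, hgQ⟩
          · exact absurd hgM (mem_sdiff.mp h).2
        · rintro ⟨hgA, hgQ⟩
          exact ⟨(mem_sdiff.mp hgA).1, hgQ⟩
      have hdisj : Disjoint (M \ Q) (B ∩ Q) := by
        rw [Finset.disjoint_left]
        intro g hg hg'
        exact (mem_sdiff.mp hg).2 (mem_inter.mp hg').2
      have h1 := card_inter_add_card_sdiff M Q
      have hMk := hMmem.2
      rw [card_union_of_disjoint hdisj, hexc, ← hMQ]
      omega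
    · have hclswap : ∀ f ∈ Q, ∀ g ∈ (M' \ M) ∪ (M \ M'), (∃ v : V, v ∈ f ∧ v ∈ g) → g ∈ Q := by
        intro f hf g hg hshare
        rw [union_comm] at hg
        exact hcl f hf g hg hshare
      exact swap_matching hM'mem.1 hMmem.1 hclswap
    · have hM'Q : M' ∩ Q = B ∩ Q := by
        ext g
        simp only [mem_inter]
        constructor
        · rintro ⟨hgM', hgQ⟩
          rcases mem_union.mp (hQD hgQ) with h | h
          · exact absurd hgM' (mem_sdiff.mp h).2
          · exact ⟨h, hgQ⟩
        · rintro ⟨hgB, hgQ⟩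
          exact ⟨(mem_sdiff.mp hgB).1, hgQ⟩
      have hdisj : Disjoint (M' \ Q) (A ∩ Q) := by
        rw [Finset.disjoint_left]
        intro g hg hg'
        exact (mem_sdiff.mp hg).2 (mem_inter.mp hg').2
      have h1 := card_inter_add_card_sdiff M' Q
      rw [hM'Q] at h1
      rw [card_union_of_disjoint hdisj]
      omega
    · have hdisj1 : Disjoint (M \ Q) (B ∩ Q) := by
        rw [Finset.disjoint_left]
        intro g hg hg'
        exact (mem_sdiff.mp hg).2 (mem_inter.mp hg').2
      have hdisj2 : Disjoint (M' \ Q) (A ∩ Q) := by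
        rw [Finset.disjoint_left]
        intro g hg hg'
        exact (mem_sdiff.mp hg).2 (mem_inter.mp hg').2
      have hMQ : M ∩ Q = A ∩ Q := by
        ext g
        simp only [mem_inter]
        constructor
        · rintro ⟨hgM, hgQ⟩
          rcases mem_union.mp (hQD hgQ) with h | h
          · exact ⟨h, hgQ⟩
          · exact absurd hgM (mem_sdiff.mp h).2
        · rintro ⟨hgA, hgQ⟩
          exact ⟨(mem_sdiff.mp hgA).1, hgQ⟩
      have hM'Q : M' ∩ Q = B ∩ Q := by
        ext g
        simp only [mem_inter]
        constructor
        · rintro ⟨hgM', hgQ⟩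
          rcases mem_union.mp (hQD hgQ) with h | h
          · exact absurd hgM' (mem_sdiff.mp h).2
          · exact ⟨h, hgQ⟩
        · rintro ⟨hgB, hgQ⟩
          exact ⟨(mem_sdiff.mp hgB).1, hgQ⟩
      rw [Finset.sum_union hdisj1, Finset.sum_union hdisj2]
      have hs1 := Finset.sum_inter_add_sum_sdiff M Q w
      have hs2 := Finset.sum_inter_add_sum_sdiff M' Q w
      rw [hMQ] at hs1
      rw [hM'Q] at hs2
      linarith
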